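/- arXiv:gr-qc/0407094 — 3 statements merged into one kernel-verified Lean document; each statement's English description precedes it below -/
import Mathlib

section
/- In a continuous poset, the sets ↟x = {y : x ≪ y}, for x ranging over the poset, form a basis for the Scott topology. -/
open Set

/-- `a` is way below `x`. -/
def wayBelow {α : Type*} [Preorder α] (a x : α) : Prop :=
  ∀ S : Set α, S.Nonempty → DirectedOn (· ≤ ·) S → ∀ d, IsLUB S d → x ≤ d →
    ∃ s ∈ S, a ≤ s

/-- A poset is continuous if every element is the supremum of a directed set
of elements way below it. -/
def ContinuousPoset (α : Type*) [Preorder α] : Prop :=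
  ∀ x : α, ∃ S : Set α, S ⊆ {a | wayBelow a x} ∧ S.Nonempty ∧
    DirectedOn (· ≤ ·) S ∧ IsLUB S x

/-- A basis for a continuous poset. -/
def PosetBasis {α : Type*} [Preorder α] (B : Set α) : Prop :=
  ∀ x : α, ∃ S : Set α, S ⊆ B ∩ {a | wayBelow a x} ∧ S.Nonempty ∧
    DirectedOn (· ≤ ·) S ∧ IsLUB S x

/-- Scott open sets: upper sets inaccessible by directed suprema. -/
def ScottOpen {α : Type*} [Preorder α] (U : Set α) : Prop :=
  IsUpperSet U ∧ ∀ S : Set α, S.Nonempty → DirectedOn (· ≤ ·) S → ∀ d, IsLUB S d →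
    d ∈ U → (S ∩ U).Nonempty

/-- The Scott topology. -/
def scottTop (α : Type*) [Preorder α] : TopologicalSpace α :=
  TopologicalSpace.generateFrom {U | ScottOpen U}

/-- A bicontinuous poset. -/
def Bicontinuous (α : Type*) [Preorder α] : Prop :=
  ContinuousPoset α ∧
  (∀ x y : α, wayBelow x y ↔
    ∀ S : Set α, S.Nonempty → DirectedOn (· ≥ ·) S → ∀ i, IsGLB S i → i ≤ x →
      ∃ s ∈ S, s ≤ y) ∧
  (∀ x : α, DirectedOn (· ≥ ·) {y | wayBelow x y} ∧ IsGLB {y | wayBelow x y} x)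

/-- The basic open intervals `(a,b) = {x | a ≪ x ≪ b}`. -/
def intervalBasis (α : Type*) [Preorder α] : Set (Set α) :=
  {s | ∃ a b : α, s = {x | wayBelow a x ∧ wayBelow x b}}

/-- The interval topology, generated by the sets `(a,b)`. -/
def intervalTop (α : Type*) [Preorder α] : TopologicalSpace α :=
  TopologicalSpace.generateFrom (intervalBasis α)

/-- A globally hyperbolic poset: bicontinuous, with compact closed intervals. -/
def GloballyHyperbolic (α : Type*) [PartialOrder α] : Prop :=
  Bicontinuous α ∧ ∀ a b : α, @IsCompact α (intervalTop α) (Set.Icc a b)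

/-- The poset of closed intervals `[a,b]`, `a ≤ b`, under reverse inclusion. -/
def IX (α : Type*) [PartialOrder α] := {p : α × α // p.1 ≤ p.2}

instance IX.instPartialOrder {α : Type*} [PartialOrder α] : PartialOrder (IX α) where
  le x y := x.1.1 ≤ y.1.1 ∧ y.1.2 ≤ x.1.2
  le_refl x := ⟨le_refl _, le_refl _⟩
  le_trans x y z h1 h2 := ⟨h1.1.trans h2.1, h2.2.trans h1.2⟩
  le_antisymm x y h1 h2 :=
    Subtype.ext (Prod.ext_iff.mpr ⟨le_antisymm h1.1 h2.1, le_antisymm h2.2 h1.2⟩)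

section Rel

variable {β : Type*}

/-- Directedness with respect to an arbitrary relation. -/
def relDirectedOn (r : β → β → Prop) (S : Set β) : Prop :=
  ∀ x ∈ S, ∀ y ∈ S, ∃ z ∈ S, r x z ∧ r y z

/-- Least upper bound with respect to an arbitrary relation. -/
def relIsLUB (r : β → β → Prop) (S : Set β) (d : β) : Prop :=
  (∀ s ∈ S, r s d) ∧ ∀ u, (∀ s ∈ S, r s u) → r d u

/-- The way-below relation with respect to an arbitrary relation. -/
def relWayBelow (r : β → β → Prop) (a x : β) : Prop :=
  ∀ S : Set β, S.Nonempty → relDirectedOn r S → ∀ d, relIsLUB r S d → r x d →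
    ∃ s ∈ S, r a s

/-- An abstract basis: a transitive relation, interpolative from the `-` direction. -/
def AbstractBasis (r : β → β → Prop) : Prop :=
  Transitive r ∧ ∀ (F : Finset β) (x : β), (∀ y ∈ F, r y x) →
    ∃ z, (∀ y ∈ F, r y z) ∧ r z x

/-- Interpolation in the `+` direction. -/
def PlusInterpolative (r : β → β → Prop) : Prop :=
  ∀ (F : Finset β) (x : β), (∀ y ∈ F, r x y) → ∃ z, r x z ∧ (∀ y ∈ F, r z y)

/-- An ideal: a nonempty directed lower set. -/
def IsIdeal (r : β → β → Prop) (I : Set β) : Prop :=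
  I.Nonempty ∧ (∀ x y, r x y → y ∈ I → x ∈ I) ∧
    ∀ x ∈ I, ∀ y ∈ I, ∃ z ∈ I, r x z ∧ r y z

/-- The ideal completion: ideals ordered by inclusion. -/
def IdealCompletion (r : β → β → Prop) := {I : Set β // IsIdeal r I}

instance IdealCompletion.instPartialOrder {β : Type*} (r : β → β → Prop) :
    PartialOrder (IdealCompletion r) where
  le I J := I.1 ⊆ J.1
  le_refl I := subset_rfl
  le_trans I J K h1 h2 := Set.Subset.trans h1 h2
  le_antisymm I J h1 h2 := Subtype.ext (Set.Subset.antisymm h1 h2)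

end Rel

/-- The order on maximal elements induced by interval endpoints. -/
def maxLe {α : Type*} (left right : α → α) (a b : α) : Prop :=
  ∃ x, left x = a ∧ right x = b

/-- An interval poset. -/
structure IntervalPoset (α : Type*) [PartialOrder α] where
  left : α → α
  right : α → α
  left_max : ∀ x, IsMax (left x)
  right_max : ∀ x, IsMax (right x)
  glb : ∀ x, IsGLB {left x, right x} x
  glue : ∀ x y, right x = left y →
    ∃ z, IsGLB {x, y} z ∧ left z = left x ∧ right z = right y
  sub_left : ∀ x p, IsMax p → x ≤ p →
    ∃ z, IsGLB {left x, p} z ∧ left z = left x ∧ right z = p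
  sub_right : ∀ x p, IsMax p → x ≤ p →
    ∃ z, IsGLB {p, right x} z ∧ left z = p ∧ right z = right x

/-- An interval domain. -/
structure IntervalDomain (α : Type*) [PartialOrder α] extends IntervalPoset α where
  dcpo : ∀ S : Set α, S.Nonempty → DirectedOn (· ≤ ·) S → ∃ d, IsLUB S d
  cont : ContinuousPoset α
  ax1 : ∀ x p, IsMax p → wayBelow x p →
    (∀ z, IsGLB {left x, p} z → ∃ u, wayBelow z u) ∧
    (∀ z, IsGLB {p, right x} z → ∃ u, wayBelow z u)
  ax2b : ∀ x : α, (∃ u, wayBelow x u) ↔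
    (∀ y, left y = left x → y ≤ x →
      relWayBelow (fun u v => u ≤ v ∧ right u = right y ∧ right v = right y) y (right y))
  ax2c : ∀ x : α, (∃ u, wayBelow x u) ↔
    (∀ y, right y = right x → y ≤ x →
      relWayBelow (fun u v => u ≤ v ∧ left u = left y ∧ left v = left y) y (left y))
  ax3a : ∀ (p : α) (S : Set α), S.Nonempty → S ⊆ {z | left z = p} →
    DirectedOn (· ≤ ·) S → ∀ u, IsLUB S u →
      left u = p ∧ ∀ (q : α) (T : Set α), T.Nonempty → T ⊆ {z | left z = q} →
        DirectedOn (· ≤ ·) T → ∀ v, IsLUB T v → right '' T = right '' S →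
          right u = right v
  ax3b : ∀ (q : α) (S : Set α), S.Nonempty → S ⊆ {z | right z = q} →
    DirectedOn (· ≤ ·) S → ∀ u, IsLUB S u →
      right u = q ∧ ∀ (p : α) (T : Set α), T.Nonempty → T ⊆ {z | right z = p} →
        DirectedOn (· ≤ ·) T → ∀ v, IsLUB T v → left '' T = left '' S →
          left u = left v
  ax4 : ∀ x : α, @IsCompact α (scottTop α) ({y | x ≤ y} ∩ {y | IsMax y})

section Aux

variable {α : Type*} [PartialOrder α]

lemma wayBelow_le {a x : α} (h : wayBelow a x) : a ≤ x := by
  obtain ⟨s, hs, hle⟩ := h {x} ⟨x, rfl⟩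
    (fun u hu v hv => ⟨x, rfl, by simp_all, by simp_all⟩) x isLUB_singleton le_rfl
  simp only [mem_singleton_iff] at hs; subst hs; exact hle

lemma wayBelow_mono_left {a' a x : α} (h1 : a' ≤ a) (h : wayBelow a x) : wayBelow a' x := by
  intro S hne hdir d hlub hxd
  obtain ⟨s, hs, hle⟩ := h S hne hdir d hlub hxd
  exact ⟨s, hs, h1.trans hle⟩

lemma wayBelow_mono_right {a x y : α} (h : wayBelow a x) (h1 : x ≤ y) : wayBelow a y :=
  fun S hne hdir d hlub hyd => h S hne hdir d hlub (h1.trans hyd)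

lemma interpolation (hc : ContinuousPoset α) {a x : α} (h : wayBelow a x) :
    ∃ b, wayBelow a b ∧ wayBelow b x := by
  obtain ⟨S, hS, hSne, hSdir, hSlub⟩ := hc x
  classical
  let T : α → Set α := fun s => (hc s).choose
  have hT : ∀ s, T s ⊆ {a | wayBelow a s} ∧ (T s).Nonempty ∧
      DirectedOn (· ≤ ·) (T s) ∧ IsLUB (T s) s := fun s => (hc s).choose_spec
  set D : Set α := ⋃ s ∈ S, T s with hD
  have hDne : D.Nonempty := by
    obtain ⟨s, hs⟩ := hSne
    obtain ⟨t, ht⟩ := (hT s).2.1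
    exact ⟨t, Set.mem_biUnion hs ht⟩
  -- membership helper
  have memD : ∀ {t}, t ∈ D → ∃ s ∈ S, t ∈ T s := by
    intro t ht
    obtain ⟨s, hs, hts⟩ := Set.mem_iUnion₂.mp ht
    exact ⟨s, hs, hts⟩
  have hDdir : DirectedOn (· ≤ ·) D := by
    intro t1 ht1 t2 ht2
    obtain ⟨s1, hs1, ht1'⟩ := memD ht1
    obtain ⟨s2, hs2, ht2'⟩ := memD ht2
    obtain ⟨s3, hs3, h13, h23⟩ := hSdir s1 hs1 s2 hs2
    have hw1 : wayBelow t1 s3 := wayBelow_mono_right ((hT s1).1 ht1') h13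
    have hw2 : wayBelow t2 s3 := wayBelow_mono_right ((hT s2).1 ht2') h23
    obtain ⟨u1, hu1, hle1⟩ := hw1 (T s3) (hT s3).2.1 (hT s3).2.2.1 s3 (hT s3).2.2.2 le_rfl
    obtain ⟨u2, hu2, hle2⟩ := hw2 (T s3) (hT s3).2.1 (hT s3).2.2.1 s3 (hT s3).2.2.2 le_rfl
    obtain ⟨u3, hu3, h1, h2⟩ := (hT s3).2.2.1 u1 hu1 u2 hu2
    exact ⟨u3, Set.mem_biUnion hs3 hu3, hle1.trans h1, hle2.trans h2⟩
  have hDlub : IsLUB D x := by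
    constructor
    · intro t ht
      obtain ⟨s, hs, ht'⟩ := memD ht
      exact (wayBelow_le ((hT s).1 ht')).trans (hSlub.1 hs)
    · intro u hu
      apply hSlub.2
      intro s hs
      exact (hT s).2.2.2.2 (fun t ht => hu (Set.mem_biUnion hs ht))
  obtain ⟨t, ht, hat⟩ := h D hDne hDdir x hDlub le_rfl
  obtain ⟨s, hs, ht'⟩ := memD ht
  exact ⟨s, wayBelow_mono_left hat ((hT s).1 ht'), hS hs⟩

lemma scottOpen_hyperUp (hc : ContinuousPoset α) (a : α) :
    ScottOpen {y | wayBelow a y} := by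
  constructor
  · intro y z hyz hy
    exact wayBelow_mono_right hy hyz
  · intro S hne hdir d hlub hd
    obtain ⟨b, hab, hbd⟩ := interpolation hc hd
    obtain ⟨s, hs, hbs⟩ := hbd S hne hdir d hlub le_rfl
    exact ⟨s, hs, wayBelow_mono_right hab hbs⟩

lemma scottOpen_of_generateOpen {U : Set α}
    (h : TopologicalSpace.GenerateOpen {U | ScottOpen U} U) : ScottOpen U := by
  induction h with
  | basic _ hs => exact hs
  | univ => exact ⟨fun _ _ _ _ => trivial, fun S hne _ _ _ _ => hne.mono (by simp)⟩
  | inter U V _ _ hU hV =>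
    refine ⟨fun y z hyz hy => ⟨hU.1 hyz hy.1, hV.1 hyz hy.2⟩, ?_⟩
    intro S hne hdir d hlub hd
    obtain ⟨s1, hs1, hs1U⟩ := hU.2 S hne hdir d hlub hd.1
    obtain ⟨s2, hs2, hs2V⟩ := hV.2 S hne hdir d hlub hd.2
    obtain ⟨s3, hs3, h1, h2⟩ := hdir s1 hs1 s2 hs2
    exact ⟨s3, hs3, hU.1 h1 hs1U, hV.1 h2 hs2V⟩
  | sUnion 𝒮 _ h𝒮 =>
    refine ⟨fun y z hyz hy => ?_, ?_⟩
    · obtain ⟨V, hV, hyV⟩ := hy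
      exact ⟨V, hV, (h𝒮 V hV).1 hyz hyV⟩
    · intro S hne hdir d hlub hd
      obtain ⟨V, hV, hdV⟩ := hd
      obtain ⟨s, hs, hsV⟩ := (h𝒮 V hV).2 S hne hdir d hlub hdV
      exact ⟨s, hs, V, hV, hsV⟩

end Aux

/-- the sets `↟x` form a basis for the Scott topology on a continuous poset. -/
theorem scott_basis {α : Type*} [PartialOrder α] (h : ContinuousPoset α) :
    @TopologicalSpace.IsTopologicalBasis α (scottTop α)
      {s | ∃ a : α, s = {y | wayBelow a y}} := by
  refine @TopologicalSpace.isTopologicalBasis_of_isOpen_of_nhds α (scottTop α) _ ?_ ?_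
  · rintro s ⟨a, rfl⟩
    exact TopologicalSpace.GenerateOpen.basic _ (scottOpen_hyperUp h a)
  · intro x U hxU hU
    have hSO : ScottOpen U := scottOpen_of_generateOpen hU
    obtain ⟨S, hS, hSne, hSdir, hSlub⟩ := h x
    obtain ⟨s, hs, hsU⟩ := hSO.2 S hSne hSdir x hSlub hxU
    refine ⟨{y | wayBelow s y}, ⟨s, rfl⟩, hS hs, ?_⟩
    intro y hy
    exact hSO.1 (wayBelow_le hy) hsU
end

section
/- In a bicontinuous poset, the Lawson topology is contained in the interval topology; in particular, for every x the set of elements not above x is open in the interval topology. -/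
open Set

section Helpers

variable {α : Type*} [PartialOrder α]

lemma wb_le {a b : α} (h : wayBelow a b) : a ≤ b := by
  obtain ⟨s, hs, hle⟩ := h {b} ⟨b, rfl⟩
    (fun x hx y hy => ⟨b, rfl, by simp_all, by simp_all⟩) b isLUB_singleton le_rfl
  simp only [Set.mem_singleton_iff] at hs; subst hs; exact hle

lemma wb_mono_left {x a b : α} (hxa : x ≤ a) (h : wayBelow a b) : wayBelow x b := by
  intro S hS hd d hlub hbd
  obtain ⟨s, hs, has⟩ := h S hS hd d hlub hbd
  exact ⟨s, hs, hxa.trans has⟩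

lemma wb_mono_right {a b c : α} (h : wayBelow a b) (hbc : b ≤ c) : wayBelow a c := by
  intro S hS hd d hlub hcd
  exact h S hS hd d hlub (hbc.trans hcd)

lemma below_nonempty (hcont : ContinuousPoset α) (y : α) : ∃ a, wayBelow a y := by
  obtain ⟨S, hSsub, ⟨s, hs⟩, _, _⟩ := hcont y
  exact ⟨s, hSsub hs⟩

/-- Interpolation downwards: from `x ≪ y` find `a` with `x ≤ a ≪ y`. -/
lemma interp_left (hcont : ContinuousPoset α) {x y : α} (h : wayBelow x y) :
    ∃ a, x ≤ a ∧ wayBelow a y := by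
  obtain ⟨S, hSsub, hne, hdir, hlub⟩ := hcont y
  obtain ⟨s, hs, hxs⟩ := h S hne hdir y hlub le_rfl
  exact ⟨s, hxs, hSsub hs⟩

lemma up_nonempty (h : Bicontinuous α) (y : α) : ∃ b, wayBelow y b := by
  by_contra hno
  push_neg at hno
  have hglb := (h.2.2 y).2
  have hempty : {b | wayBelow y b} = (∅ : Set α) := by
    ext b; simp [hno b]
  rw [hempty] at hglb
  -- y is a top element
  have htop : ∀ z : α, z ≤ y := fun z => hglb.2 (by simp [lowerBounds])
  have : wayBelow y y := by
    rw [h.2.1]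
    intro S ⟨s, hs⟩ _ i _ _
    exact ⟨s, hs, htop s⟩
  exact hno y this

lemma not_le_exists (h : Bicontinuous α) {x y : α} (hxy : ¬ x ≤ y) :
    ∃ b, wayBelow y b ∧ ¬ x ≤ b := by
  by_contra hno
  push_neg at hno
  have hglb := (h.2.2 y).2
  exact hxy (hglb.2 fun b hb => hno b hb)

/-- A common lower bound in the filtered set `↟y` avoiding a finite set of
lower bounds. -/
lemma filtered_lower (h : Bicontinuous α) (y : α) (F : Finset α)
    (hF : ∀ a ∈ F, ¬ a ≤ y) : ∃ b, wayBelow y b ∧ ∀ a ∈ F, ¬ a ≤ b := by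
  classical
  induction F using Finset.induction_on with
  | empty =>
    obtain ⟨b, hb⟩ := up_nonempty h y
    exact ⟨b, hb, by simp⟩
  | @insert a F ha ih =>
    obtain ⟨b, hb, hbF⟩ := ih (fun a' ha' => hF a' (Finset.mem_insert_of_mem ha'))
    obtain ⟨c, hc, hac⟩ := not_le_exists h (hF a (Finset.mem_insert_self a F))
    obtain ⟨d, hd, hdb, hdc⟩ := (h.2.2 y).1 b hb c hc
    refine ⟨d, hd, ?_⟩
    intro a' ha'
    rcases Finset.mem_insert.mp ha' with rfl | ha'
    · exact fun hle => hac (hle.trans hdc)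
    · exact fun hle => hbF a' ha' (hle.trans hdb)

lemma open_of_basis {U : Set α}
    (hU : ∀ y ∈ U, ∃ a b : α, wayBelow a y ∧ wayBelow y b ∧
      {w | wayBelow a w ∧ wayBelow w b} ⊆ U) :
    @IsOpen α (intervalTop α) U := by
  letI : TopologicalSpace α := intervalTop α
  have : U = ⋃₀ {V | V ∈ intervalBasis α ∧ V ⊆ U} := by
    apply Set.Subset.antisymm
    · intro y hy
      obtain ⟨a, b, hay, hyb, hsub⟩ := hU y hy
      exact ⟨{w | wayBelow a w ∧ wayBelow w b}, ⟨⟨a, b, rfl⟩, hsub⟩, hay, hyb⟩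
    · intro y ⟨V, ⟨_, hVU⟩, hyV⟩
      exact hVU hyV
  rw [this]
  apply isOpen_sUnion
  intro V ⟨hVb, _⟩
  exact TopologicalSpace.GenerateOpen.basic V hVb

end Helpers

/-- in a bicontinuous poset the Lawson topology is contained in the
interval topology; in particular each set `{y | ¬ x ≤ y}` is open in the interval
topology. -/
theorem lawson_subset_interval {α : Type*} [PartialOrder α] (h : Bicontinuous α) :
    letI : TopologicalSpace α := intervalTop α
    (∀ x : α, IsOpen {y : α | ¬ x ≤ y}) ∧
    (∀ (x : α) (F : Finset α),
      IsOpen ({y : α | wayBelow x y} \ {y : α | ∃ a ∈ F, a ≤ y})) := by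
  constructor
  · intro x
    apply open_of_basis
    intro y hy
    obtain ⟨b, hyb, hxb⟩ := not_le_exists h hy
    obtain ⟨a, hay⟩ := below_nonempty h.1 y
    refine ⟨a, b, hay, hyb, ?_⟩
    intro w ⟨_, hwb⟩ hxw
    exact hxb (hxw.trans (wb_le hwb))
  · intro x F
    apply open_of_basis
    intro y ⟨hxy, hF⟩
    simp only [Set.mem_setOf_eq, not_exists, not_and] at hF
    obtain ⟨a, hxa, hay⟩ := interp_left h.1 hxy
    obtain ⟨b, hyb, hbF⟩ := filtered_lower h y F hF
    refine ⟨a, b, hay, hyb, ?_⟩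
    intro w ⟨haw, hwb⟩
    refine ⟨wb_mono_left hxa haw, ?_⟩
    simp only [Set.mem_setOf_eq, not_exists, not_and]
    intro a' ha' hle
    exact hbF a' ha' (hle.trans (wb_le hwb))
end

section
/- In a globally hyperbolic poset, every filtered set with a lower bound has an infimum. -/
open Set

section Aux

variable {α : Type*} [PartialOrder α]

lemma exists_wayBelow {x : α} (hc : ContinuousPoset α) : ∃ a, wayBelow a x := by
  obtain ⟨S, hsub, ⟨a, ha⟩, -, -⟩ := hc x
  exact ⟨a, hsub ha⟩

lemma exists_wayBelow_not_le (hc : ContinuousPoset α) {x s : α} (hxs : ¬ x ≤ s) :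
    ∃ a, wayBelow a x ∧ ¬ a ≤ s := by
  obtain ⟨S, hsub, hne, hdir, hlub⟩ := hc x
  by_contra hcon
  push_neg at hcon
  exact hxs (hlub.2 fun a ha => hcon a (hsub ha))

lemma exists_wayAbove (hb : Bicontinuous α) (x : α) : ∃ y, wayBelow x y := by
  obtain ⟨hdir, hglb⟩ := (hb.2.2 x)
  rcases Set.eq_empty_or_nonempty {y | wayBelow x y} with he | ⟨y, hy⟩
  · -- x is a top element
    have htop : ∀ y : α, y ≤ x := fun y => hglb.2 (by simp [he, lowerBounds])
    refine ⟨x, (hb.2.1 x x).mpr ?_⟩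
    rintro S ⟨s, hs⟩ _ i _ _
    exact ⟨s, hs, htop s⟩
  · exact ⟨y, hy⟩

lemma exists_wayAbove_not_ge (hb : Bicontinuous α) {x c : α} (hcx : ¬ c ≤ x) :
    ∃ y, wayBelow x y ∧ ¬ c ≤ y := by
  obtain ⟨-, hglb⟩ := (hb.2.2 x)
  by_contra hcon
  push_neg at hcon
  exact hcx (hglb.2 fun y hy => hcon y hy)

lemma isOpen_of_basic {U : Set α}
    (h : ∀ x ∈ U, ∃ B ∈ intervalBasis α, x ∈ B ∧ B ⊆ U) :
    @IsOpen α (intervalTop α) U := by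
  have : U = ⋃₀ {B | B ∈ intervalBasis α ∧ B ⊆ U} := by
    ext x
    constructor
    · intro hx
      obtain ⟨B, hB, hxB, hBU⟩ := h x hx
      exact ⟨B, ⟨hB, hBU⟩, hxB⟩
    · rintro ⟨B, ⟨-, hBU⟩, hxB⟩; exact hBU hxB
  rw [this]
  exact TopologicalSpace.GenerateOpen.sUnion _
    (fun B hB => TopologicalSpace.GenerateOpen.basic _ hB.1)

lemma isClosed_downset (hb : Bicontinuous α) (s : α) :
    @IsClosed α (intervalTop α) {z | z ≤ s} := by
  letI := intervalTop α
  rw [← isOpen_compl_iff]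
  apply isOpen_of_basic
  intro x hx
  simp only [Set.mem_compl_iff, Set.mem_setOf_eq] at hx
  obtain ⟨a, hax, has⟩ := exists_wayBelow_not_le hb.1 hx
  obtain ⟨y, hxy⟩ := exists_wayAbove hb x
  refine ⟨{z | wayBelow a z ∧ wayBelow z y}, ⟨a, y, rfl⟩, ⟨hax, hxy⟩, ?_⟩
  rintro z ⟨haz, -⟩ hzs
  exact has ((wayBelow_le haz).trans hzs)

lemma isClosed_upset (hb : Bicontinuous α) (c : α) :
    @IsClosed α (intervalTop α) {z | c ≤ z} := by
  letI := intervalTop α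
  rw [← isOpen_compl_iff]
  apply isOpen_of_basic
  intro x hx
  simp only [Set.mem_compl_iff, Set.mem_setOf_eq] at hx
  obtain ⟨y, hxy, hcy⟩ := exists_wayAbove_not_ge hb hx
  obtain ⟨a, hax⟩ := exists_wayBelow (x := x) hb.1
  refine ⟨{z | wayBelow a z ∧ wayBelow z y}, ⟨a, y, rfl⟩, ⟨hax, hxy⟩, ?_⟩
  rintro z ⟨-, hzy⟩ hcz
  exact hcy (hcz.trans (wayBelow_le hzy))

end Aux

/-- in a globally hyperbolic poset, every filtered set with a lower
bound has an infimum. -/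
theorem filtered_bounded_has_inf {α : Type*} [PartialOrder α]
    (h : GloballyHyperbolic α) (S : Set α) (hne : S.Nonempty)
    (hfil : DirectedOn (· ≥ ·) S) (b : α) (hb : b ∈ lowerBounds S) :
    ∃ d : α, IsGLB S d := by
  classical
  letI := intervalTop α
  obtain ⟨a0, ha0⟩ := hne
  have hK : IsCompact (Set.Icc b a0) := h.2 b a0
  -- the filter of tails
  set tail : α → Set α := fun s => {t | t ∈ S ∧ t ≤ s} with htail
  have htail_ne : ∀ s ∈ S, (tail s).Nonempty := fun s hs => ⟨s, hs, le_rfl⟩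
  set F : Filter α := ⨅ s : S, Filter.principal (tail s) with hF
  have hdirF : Directed (· ≥ ·) (fun s : S => Filter.principal (tail s)) := by
    rintro ⟨s1, hs1⟩ ⟨s2, hs2⟩
    obtain ⟨t, ht, hts1, hts2⟩ := hfil s1 hs1 s2 hs2
    exact ⟨⟨t, ht⟩, Filter.principal_mono.2 (fun u hu => ⟨hu.1, hu.2.trans hts1⟩),
      Filter.principal_mono.2 (fun u hu => ⟨hu.1, hu.2.trans hts2⟩)⟩
  haveI : Nonempty α := ⟨a0⟩
  haveI : Nonempty S := ⟨⟨a0, ha0⟩⟩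
  haveI hFne : F.NeBot := Filter.iInf_neBot_of_directed hdirF
    (fun s => Filter.principal_neBot_iff.2 (htail_ne s s.2))
  have hmemF : ∀ s ∈ S, tail s ∈ F :=
    fun s hs => Filter.mem_iInf_of_mem ⟨s, hs⟩ (Filter.mem_principal_self _)
  have hle : F ≤ Filter.principal (Set.Icc b a0) := by
    rw [Filter.le_principal_iff]
    exact Filter.mem_of_superset (hmemF a0 ha0)
      (fun t ht => ⟨hb ht.1, ht.2⟩)
  obtain ⟨d, -, hd⟩ := hK hle
  have hclos : ∀ T ∈ F, d ∈ closure T := by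
    intro T hT
    rw [mem_closure_iff_clusterPt]
    exact hd.mono (Filter.le_principal_iff.2 hT)
  refine ⟨d, ?_, ?_⟩
  · intro s hs
    have h1 : d ∈ closure (tail s) := hclos _ (hmemF s hs)
    have h2 : closure (tail s) ⊆ {z | z ≤ s} :=
      (isClosed_downset h.1 s).closure_subset_iff.2 (fun t ht => ht.2)
    exact h2 h1
  · intro c hc
    have hup : {z | c ≤ z} ∈ F :=
      Filter.mem_of_superset (hmemF a0 ha0) (fun t ht => hc ht.1)
    have h1 : d ∈ closure {z | c ≤ z} := hclos _ hup
    rwa [(isClosed_upset h.1 c).closure_eq] at h1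
end
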